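/- Let α ≠ 0 and let v : (−1,1) → ℝ be C¹, positive, with v(0) = c > 0, v' < 0 on (−1,0), v' > 0 on (0,1), and v(x) → +∞ as x → ±1. Let f₁(s) denote the unique x ∈ (0,1) with v(x) = s and f₂(s) the unique x ∈ (0,1) with v(−x) = s, for s > c. Let λ > α²c and set β = λ/α² − c. Then the two-dimensional Lebesgue measure of {(x,ξ) : x ∈ (−1,1), ξ > 0, ξ²/v(x) + α²v(x) < λ} equals |α| · ∫_0^β √(β − S) · √(S + c) · (f₁'(S + c) + f₂'(S + c)) dS. -/

import Mathlib

open Set MeasureTheory Filter Topology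

lemma sw_core (α c lam : ℝ) (hα : α ≠ 0) (hc : 0 < c) (hlam : α ^ 2 * c < lam)
    (u : ℝ → ℝ) (hu : ContDiffOn ℝ 1 u (Ioo (-1) 1)) (hu0 : u 0 = c)
    (hud : ∀ x ∈ Ioo (0:ℝ) 1, 0 < deriv u x)
    (f : ℝ → ℝ) (hf_mem : ∀ s ∈ Ioi c, f s ∈ Ioo (0:ℝ) 1)
    (hf_inv : ∀ s ∈ Ioi c, u (f s) = s) :
    IntegrableOn (fun s => Real.sqrt (s * (lam - α ^ 2 * s)) * deriv f s)
      (Ioo c (lam / α ^ 2)) volume ∧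
    ∫ x in Ioo (0:ℝ) 1, Real.sqrt (u x * (lam - α ^ 2 * u x))
      = ∫ s in Ioo c (lam / α ^ 2), Real.sqrt (s * (lam - α ^ 2 * s)) * deriv f s := by
  have hα2 : 0 < α ^ 2 := by positivity
  set T : ℝ := lam / α ^ 2 with hT
  have hcT : c < T := by
    rw [hT, lt_div_iff₀ hα2]; linarith [hlam]
  have hIsub : Ioo (0:ℝ) 1 ⊆ Ioo (-1:ℝ) 1 := fun x hx => ⟨by linarith [hx.1], hx.2⟩
  have hIsub' : Ico (0:ℝ) 1 ⊆ Ioo (-1:ℝ) 1 := fun x hx => ⟨by linarith [hx.1], hx.2⟩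
  have hO : IsOpen (Ioo (-1:ℝ) 1) := isOpen_Ioo
  have hu_cont : ContinuousOn u (Ioo (-1:ℝ) 1) := hu.continuousOn
  have sm : StrictMonoOn u (Ico 0 1) := by
    apply strictMonoOn_of_deriv_pos (convex_Ico 0 1) (hu_cont.mono hIsub')
    rw [interior_Ico]; exact hud
  -- derivative of the inverse function
  have hfd : ∀ s ∈ Ioi c, HasStrictDerivAt f (deriv u (f s))⁻¹ s := by
    intro s hs
    have hx₀ : f s ∈ Ioo (0:ℝ) 1 := hf_mem s hs
    have hd : ContDiffAt ℝ 1 u (f s) := hu.contDiffAt (hO.mem_nhds (hIsub hx₀))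
    have hsd : HasStrictDerivAt u (deriv u (f s)) (f s) := hd.hasStrictDerivAt one_ne_zero
    have hne : deriv u (f s) ≠ 0 := (hud _ hx₀).ne'
    have hev : ∀ᶠ x in 𝓝 (f s), f (u x) = x := by
      have h1 : ∀ᶠ x in 𝓝 (f s), x ∈ Ioo (0:ℝ) 1 := isOpen_Ioo.eventually_mem hx₀
      have h2 : ∀ᶠ x in 𝓝 (f s), u x ∈ Ioi c := by
        apply hd.continuousAt.eventually_mem
        rw [hf_inv s hs]; exact isOpen_Ioi.mem_nhds hs
      filter_upwards [h1, h2] with x hx1 hx2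
      have := hf_inv _ hx2
      exact sm.injOn (Ioo_subset_Ico_self (hf_mem _ hx2)) (Ioo_subset_Ico_self hx1) this
    have := hsd.to_local_left_inverse hne hev
    rwa [hf_inv s hs] at this
  have hfderiv : ∀ s ∈ Ioi c, HasDerivAt f (deriv u (f s))⁻¹ s :=
    fun s hs => (hfd s hs).hasDerivAt
  have hderiv_eq : ∀ s ∈ Ioi c, deriv f s = (deriv u (f s))⁻¹ :=
    fun s hs => (hfderiv s hs).deriv
  have hf_cont : ContinuousOn f (Ioi c) :=
    fun s hs => ((hfderiv s hs).continuousAt).continuousWithinAt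
  have hmapsto : ∀ s ∈ Ioi c, f s ∈ Ioo (-1:ℝ) 1 := fun s hs => hIsub (hf_mem s hs)
  have hdu_cont : ContinuousOn (deriv u) (Ioo (-1:ℝ) 1) :=
    hu.continuousOn_deriv_of_isOpen hO le_rfl
  have hdf_cont : ContinuousOn (deriv f) (Ioi c) := by
    apply ContinuousOn.congr (f := fun s => (deriv u (f s))⁻¹) _ (fun s hs => hderiv_eq s hs)
    exact ((hdu_cont.comp hf_cont hmapsto).inv₀ (fun s hs => (hud _ (hf_mem s hs)).ne'))
  set g : ℝ → ℝ := fun x => Real.sqrt (u x * (lam - α ^ 2 * u x)) with hg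
  have hg_cont : ContinuousOn g (Ioo (-1:ℝ) 1) := by
    apply Real.continuous_sqrt.comp_continuousOn
    exact hu_cont.mul (continuousOn_const.sub (continuousOn_const.mul hu_cont))
  set F : ℝ → ℝ := fun s => Real.sqrt (s * (lam - α ^ 2 * s)) * deriv f s with hF
  have hT_mem : T ∈ Ioi c := hcT
  set x₁ : ℝ := f T with hx₁def
  have hx₁ : x₁ ∈ Ioo (0:ℝ) 1 := hf_mem T hT_mem
  have hux₁ : u x₁ = T := hf_inv T hT_mem
  -- f maps (c,T) into (0,x₁)
  have hflt : ∀ y ∈ Ioo c T, f y < x₁ := by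
    intro y hy
    by_contra h
    push_neg at h
    have := sm.monotoneOn (Ioo_subset_Ico_self hx₁) (Ioo_subset_Ico_self (hf_mem y hy.1)) h
    rw [hux₁, hf_inv y hy.1] at this
    exact absurd this (not_le.2 hy.2)
  -- substitution on compact subintervals
  have key : ∀ y ∈ Ioo c T, ∫ s in y..T, F s = ∫ x in (f y)..x₁, g x := by
    intro y hy
    have huIcc : uIcc y T = Icc y T := uIcc_of_le hy.2.le
    have hsubIoi : uIcc y T ⊆ Ioi c := by rw [huIcc]; exact fun s hs => lt_of_lt_of_le hy.1 hs.1
    have h1 : ∀ x ∈ uIcc y T, HasDerivAt f (deriv f x) x := by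
      intro x hx
      rw [hderiv_eq x (hsubIoi hx)]
      exact hfderiv x (hsubIoi hx)
    have h2 : ContinuousOn (deriv f) (uIcc y T) := hdf_cont.mono hsubIoi
    have h3 : ContinuousOn g (f '' uIcc y T) := by
      apply hg_cont.mono
      rintro - ⟨x, hx, rfl⟩
      exact hmapsto x (hsubIoi hx)
    have := intervalIntegral.integral_comp_smul_deriv' h1 h2 h3
    rw [← this]
    apply intervalIntegral.integral_congr
    intro s hs
    have hsc : s ∈ Ioi c := hsubIoi hs
    simp only [Function.comp_apply, smul_eq_mul, hg, hF]
    rw [hf_inv s hsc]; ring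
  -- bound on g
  set M : ℝ := Real.sqrt (lam ^ 2 / (4 * α ^ 2)) with hM
  have hgbd : ∀ x : ℝ, ‖g x‖ ≤ M := by
    intro x
    rw [Real.norm_of_nonneg (Real.sqrt_nonneg _)]
    apply Real.sqrt_le_sqrt
    rw [le_div_iff₀ (by positivity)]
    nlinarith [sq_nonneg (lam - 2 * α ^ 2 * u x)]
  -- f tends to 0 from the right at c
  have htf : Tendsto f (𝓝[>] c) (𝓝 0) := by
    rw [Metric.tendsto_nhdsWithin_nhds]
    intro ε hε
    set ε' : ℝ := min (ε / 2) 2⁻¹ with hε'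
    have hε'pos : 0 < ε' := lt_min (by linarith) (by norm_num)
    have hε'lt1 : ε' < 1 := lt_of_le_of_lt (min_le_right _ _) (by norm_num)
    have hεmem : ε' ∈ Ico (0:ℝ) 1 := ⟨hε'pos.le, hε'lt1⟩
    have huε' : c < u ε' := by
      have := sm (left_mem_Ico.2 one_pos) hεmem hε'pos
      rwa [hu0] at this
    refine ⟨u ε' - c, by linarith, fun s hs hds => ?_⟩
    have hslt : s < u ε' := by
      rw [Real.dist_eq, abs_lt] at hds
      linarith [hds.2]
    have hfs : f s ∈ Ioo (0:ℝ) 1 := hf_mem s hs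
    have hlt : f s < ε' := by
      by_contra h
      push_neg at h
      have := sm.monotoneOn hεmem (Ioo_subset_Ico_self hfs) h
      rw [hf_inv s hs] at this
      linarith
    rw [Real.dist_eq, sub_zero, abs_of_pos hfs.1]
    exact lt_of_lt_of_le hlt (le_trans (min_le_left _ _) (by linarith))
  -- A := the right-hand side area piece
  set A : ℝ := ∫ x in (0:ℝ)..x₁, g x with hA
  have hIooT : Ioo c T ∈ 𝓝[>] c := Ioo_mem_nhdsGT_of_mem ⟨le_refl c, hcT⟩
  have hgint : ∀ a b : ℝ, a ∈ Icc (0:ℝ) 1 → b ∈ Icc (0:ℝ) 1 → b < 1 → a < 1 →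
      IntervalIntegrable g volume a b := by
    intro a b ha hb hb1 ha1
    apply ContinuousOn.intervalIntegrable
    apply hg_cont.mono
    intro x hx
    rcases le_total a b with h | h
    · rw [uIcc_of_le h] at hx
      exact ⟨by linarith [hx.1, ha.1], by linarith [hx.2]⟩
    · rw [uIcc_of_ge h] at hx
      exact ⟨by linarith [hx.1, hb.1], by linarith [hx.2]⟩
  have hΦ : Tendsto (fun y => ∫ x in (f y)..x₁, g x) (𝓝[>] c) (𝓝 A) := by
    have hsplit : ∀ y ∈ Ioo c T,
        (∫ x in (f y)..x₁, g x) = A - ∫ x in (0:ℝ)..(f y), g x := by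
      intro y hy
      have hfy : f y ∈ Ioo (0:ℝ) 1 := hf_mem y hy.1
      have i1 : IntervalIntegrable g volume 0 (f y) :=
        hgint 0 (f y) ⟨le_refl 0, zero_le_one⟩ ⟨hfy.1.le, hfy.2.le⟩ hfy.2 one_pos
      have i2 : IntervalIntegrable g volume (f y) x₁ :=
        hgint (f y) x₁ ⟨hfy.1.le, hfy.2.le⟩ ⟨hx₁.1.le, hx₁.2.le⟩ hx₁.2 hfy.2
      have := intervalIntegral.integral_add_adjacent_intervals i1 i2
      rw [hA, ← this]; ring
    have hz : Tendsto (fun y => ∫ x in (0:ℝ)..(f y), g x) (𝓝[>] c) (𝓝 0) := by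
      apply squeeze_zero_norm' (a := fun y => M * |f y|)
      · filter_upwards with y
        have := intervalIntegral.norm_integral_le_of_norm_le_const
          (C := M) (f := g) (a := 0) (b := f y) (fun x _ => hgbd x)
        simpa using this
      · have : Tendsto (fun y => M * |f y|) (𝓝[>] c) (𝓝 (M * |0|)) :=
          (tendsto_const_nhds.mul (htf.abs))
        simpa using this
    have : Tendsto (fun y => A - ∫ x in (0:ℝ)..(f y), g x) (𝓝[>] c) (𝓝 (A - 0)) :=
      tendsto_const_nhds.sub hz
    rw [sub_zero] at this
    exact this.congr' (by filter_upwards [hIooT] with y hy using (hsplit y hy).symm)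
  have hFt : Tendsto (fun y => ∫ s in y..T, F s) (𝓝[>] c) (𝓝 A) :=
    hΦ.congr' (by filter_upwards [hIooT] with y hy using (key y hy).symm)
  -- sequence converging to c from the right
  set a : ℕ → ℝ := fun n => c + (T - c) / (n + 2) with ha
  have ha_mem : ∀ n, a n ∈ Ioo c T := by
    intro n
    constructor
    · have : 0 < (T - c) / (n + 2 : ℝ) := div_pos (by linarith) (by positivity)
      simp only [ha]; linarith
    · have h2 : (1:ℝ) < (n:ℝ) + 2 := by
        have := Nat.cast_nonneg (α := ℝ) n; linarith
      have : (T - c) / (n + 2 : ℝ) < T - c := div_lt_self (by linarith) h2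
      simp only [ha]; linarith
  have ha_tend : Tendsto a atTop (𝓝[>] c) := by
    rw [tendsto_nhdsWithin_iff]
    constructor
    · have h1 : Tendsto (fun n : ℕ => (T - c) / (n + 2)) atTop (𝓝 0) := by
        apply Tendsto.div_atTop tendsto_const_nhds
        exact tendsto_atTop_add_const_right _ 2 tendsto_natCast_atTop_atTop
      have := tendsto_const_nhds (x := c) (f := atTop (α := ℕ)) |>.add h1
      simpa using this
    · exact Eventually.of_forall (fun n => (ha_mem n).1)
  have hcov : AECover (volume.restrict (Ioo c T)) atTop (fun n => Icc (a n) T) :=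
    MeasureTheory.aecover_Ioo_of_Icc (ha_tend.mono_right nhdsWithin_le_nhds) tendsto_const_nhds
  have hFcont : ContinuousOn F (Ioi c) := by
    apply ContinuousOn.mul _ hdf_cont
    exact (Real.continuous_sqrt.comp (continuous_id.mul (continuous_const.sub (continuous_const.mul continuous_id)))).continuousOn
  have hFi : ∀ n, IntegrableOn F (Icc (a n) T) volume := by
    intro n
    apply (hFcont.mono _).integrableOn_compact isCompact_Icc
    exact fun s hs => lt_of_lt_of_le (ha_mem n).1 hs.1
  have hseq : Tendsto (fun n => ∫ s in Icc (a n) T, F s) atTop (𝓝 A) := by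
    have : (fun n => ∫ s in Icc (a n) T, F s) = fun n => ∫ s in (a n)..T, F s := by
      funext n
      rw [intervalIntegral.integral_of_le (ha_mem n).2.le, integral_Icc_eq_integral_Ioc]
    rw [this]
    exact hFt.comp ha_tend
  have hnng : 0 ≤ᵐ[volume.restrict (Ioo c T)] F := by
    rw [EventuallyLE, ae_restrict_iff' measurableSet_Ioo]
    apply Eventually.of_forall
    intro s hs
    have : 0 ≤ deriv f s := by
      rw [hderiv_eq s hs.1]
      exact (inv_pos.2 (hud _ (hf_mem s hs.1))).le
    simpa [hF] using mul_nonneg (Real.sqrt_nonneg _) this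
  have hFi' : ∀ n, IntegrableOn F (Icc (a n) T) (volume.restrict (Ioo c T)) := by
    intro n
    exact (hFi n).mono_measure Measure.restrict_le_self
  have hseq' : Tendsto (fun n => ∫ s in Icc (a n) T, F s ∂(volume.restrict (Ioo c T)))
      atTop (𝓝 A) := by
    have hinter : ∀ n, Icc (a n) T ∩ Ioo c T = Ico (a n) T := by
      intro n
      ext x
      constructor
      · rintro ⟨⟨h1, h2⟩, ⟨h3, h4⟩⟩; exact ⟨h1, h4⟩
      · rintro ⟨h1, h2⟩; exact ⟨⟨h1, h2.le⟩, lt_of_lt_of_le (ha_mem n).1 h1, h2⟩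
    have : (fun n => ∫ s in Icc (a n) T, F s ∂(volume.restrict (Ioo c T)))
        = fun n => ∫ s in Icc (a n) T, F s := by
      funext n
      rw [Measure.restrict_restrict measurableSet_Icc, hinter n,
        integral_Ico_eq_integral_Ioo, ← integral_Icc_eq_integral_Ioo]
    rw [this]
    exact hseq
  have hint : IntegrableOn F (Ioo c T) volume :=
    hcov.integrable_of_integral_tendsto_of_nonneg_ae A hFi' hnng hseq'
  have heq : ∫ s in Ioo c T, F s = A :=
    hcov.integral_eq_of_tendsto_of_nonneg_ae A hnng hFi' hseq'
  refine ⟨hint, ?_⟩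
  have hgoal : ∫ x in Ioo (0:ℝ) 1, g x = A := by
    have hg0 : EqOn g (fun _ => (0:ℝ)) (Ico x₁ 1) := by
      intro x hx
      have hxm : x ∈ Ico (0:ℝ) 1 := ⟨le_trans hx₁.1.le hx.1, hx.2⟩
      have hle : T ≤ u x := by
        rw [← hux₁]
        exact sm.monotoneOn (Ioo_subset_Ico_self hx₁) hxm hx.1
      have hpos : 0 < u x := lt_of_lt_of_le (lt_trans hc hcT) hle
      have hlam2 : lam ≤ α ^ 2 * u x := by
        rw [hT, div_le_iff₀ hα2] at hle
        linarith
      show g x = 0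
      rw [hg]
      apply Real.sqrt_eq_zero'.2
      nlinarith
    have hgi1 : IntegrableOn g (Ioo 0 x₁) volume :=
      (hgint 0 x₁ ⟨le_rfl, zero_le_one⟩ ⟨hx₁.1.le, hx₁.2.le⟩ hx₁.2 one_pos).1.mono_set
        Ioo_subset_Ioc_self
    have hgi2 : IntegrableOn g (Ico x₁ 1) volume :=
      integrableOn_zero.congr_fun (fun x hx => (hg0 hx).symm) measurableSet_Ico
    have hdisj : Disjoint (Ioo (0:ℝ) x₁) (Ico x₁ 1) :=
      disjoint_left.2 fun x h1 h2 => absurd h1.2 (not_lt.2 h2.1)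
    rw [← Ioo_union_Ico_eq_Ioo hx₁.1 hx₁.2.le,
      setIntegral_union hdisj measurableSet_Ico hgi1 hgi2,
      setIntegral_congr_fun measurableSet_Ico hg0]
    simp only [integral_zero, add_zero]
    rw [hA, intervalIntegral.integral_of_le hx₁.1.le, integral_Ioc_eq_integral_Ioo]
  rw [hgoal, heq]

/-- For a positive C¹ single well `v` on `(-1,1)` with minimum value `c = v(0)`, inverse
branches `f₁` (right) and `f₂` (left), and `λ > α²c` with `β = λ/α² - c`, the area of
`{(x,ξ) : x ∈ (-1,1), ξ > 0, ξ²/v(x) + α²v(x) < λ}` equals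
`|α| ∫_0^β √(β-S) √(S+c) (f₁'(S+c) + f₂'(S+c)) dS`. -/
theorem area_as_abel_transform_of_sum_of_inverse_branches
    (α c : ℝ) (hα : α ≠ 0) (hc : 0 < c) (v : ℝ → ℝ)
    (hv_diff : ContDiffOn ℝ 1 v (Ioo (-1) 1))
    (hv_pos : ∀ x ∈ Ioo (-1 : ℝ) 1, 0 < v x)
    (hv0 : v 0 = c)
    (hv_deriv_neg : ∀ x ∈ Ioo (-1 : ℝ) 0, deriv v x < 0)
    (hv_deriv_pos : ∀ x ∈ Ioo (0 : ℝ) 1, 0 < deriv v x)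
    (hv_left : Tendsto v (𝓝[>] (-1 : ℝ)) atTop)
    (hv_right : Tendsto v (𝓝[<] (1 : ℝ)) atTop)
    (f₁ f₂ : ℝ → ℝ)
    (hf₁_mem : ∀ s ∈ Ioi c, f₁ s ∈ Ioo (0 : ℝ) 1)
    (hf₁_inv : ∀ s ∈ Ioi c, v (f₁ s) = s)
    (hf₂_mem : ∀ s ∈ Ioi c, f₂ s ∈ Ioo (0 : ℝ) 1)
    (hf₂_inv : ∀ s ∈ Ioi c, v (-(f₂ s)) = s)
    (lam : ℝ) (hlam : α ^ 2 * c < lam) :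
    (volume {p : ℝ × ℝ | p.1 ∈ Ioo (-1 : ℝ) 1 ∧ 0 < p.2 ∧
        p.2 ^ 2 / v p.1 + α ^ 2 * v p.1 < lam}).toReal
      = |α| * ∫ S in Ioo (0 : ℝ) (lam / α ^ 2 - c),
          Real.sqrt (lam / α ^ 2 - c - S) * Real.sqrt (S + c) *
            (deriv f₁ (S + c) + deriv f₂ (S + c)) := by
  have hα2 : 0 < α ^ 2 := by positivity
  set T : ℝ := lam / α ^ 2 with hTdef
  have hcT : c < T := by rw [hTdef, lt_div_iff₀ hα2]; linarith
  set g : ℝ → ℝ := fun x => Real.sqrt (v x * (lam - α ^ 2 * v x)) with hg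
  have hg_cont : ContinuousOn g (Ioo (-1:ℝ) 1) := by
    apply Real.continuous_sqrt.comp_continuousOn
    exact hv_diff.continuousOn.mul
      (continuousOn_const.sub (continuousOn_const.mul hv_diff.continuousOn))
  set M : ℝ := Real.sqrt (lam ^ 2 / (4 * α ^ 2)) with hM
  have hgbd : ∀ x : ℝ, ‖g x‖ ≤ M := by
    intro x
    rw [Real.norm_of_nonneg (Real.sqrt_nonneg _)]
    apply Real.sqrt_le_sqrt
    rw [le_div_iff₀ (by positivity)]
    nlinarith [sq_nonneg (lam - 2 * α ^ 2 * v x)]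
  have hgint : IntegrableOn g (Ioo (-1:ℝ) 1) volume :=
    ⟨hg_cont.aestronglyMeasurable measurableSet_Ioo,
      HasFiniteIntegral.restrict_of_bounded (C := M) measure_Ioo_lt_top
        (ae_of_all _ hgbd)⟩
  -- the region is the region between 0 and g
  have hseteq : {p : ℝ × ℝ | p.1 ∈ Ioo (-1 : ℝ) 1 ∧ 0 < p.2 ∧
      p.2 ^ 2 / v p.1 + α ^ 2 * v p.1 < lam}
      = regionBetween (fun _ => (0:ℝ)) g (Ioo (-1) 1) := by
    ext ⟨x, ξ⟩
    simp only [regionBetween, mem_setOf_eq, mem_Ioo]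
    constructor
    · rintro ⟨hx, hξ, hineq⟩
      refine ⟨hx, hξ, ?_⟩
      have hv : 0 < v x := hv_pos x hx
      rw [hg]
      rw [Real.lt_sqrt hξ.le]
      rw [div_add' _ _ _ hv.ne', div_lt_iff₀ hv] at hineq
      nlinarith
    · rintro ⟨hx, hξ, hlt⟩
      refine ⟨hx, hξ, ?_⟩
      have hv : 0 < v x := hv_pos x hx
      rw [hg, Real.lt_sqrt hξ.le] at hlt
      rw [div_add' _ _ _ hv.ne', div_lt_iff₀ hv]
      nlinarith
  have harea := volume_regionBetween_eq_integral (f := fun _ => (0:ℝ)) (g := g)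
      (μ := volume) integrableOn_zero hgint measurableSet_Ioo
      (fun x _ => Real.sqrt_nonneg _)
  simp only [Pi.sub_apply, sub_zero] at harea
  have hLHS : (volume {p : ℝ × ℝ | p.1 ∈ Ioo (-1 : ℝ) 1 ∧ 0 < p.2 ∧
      p.2 ^ 2 / v p.1 + α ^ 2 * v p.1 < lam}).toReal = ∫ x in Ioo (-1:ℝ) 1, g x := by
    rw [hseteq, Measure.volume_eq_prod, harea, ENNReal.toReal_ofReal]
    exact setIntegral_nonneg measurableSet_Ioo (fun x _ => Real.sqrt_nonneg _)
  rw [hLHS]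
  -- split the integral
  have hsplit : ∫ x in Ioo (-1:ℝ) 1, g x
      = (∫ x in Ioo (-1:ℝ) 0, g x) + ∫ x in Ioo (0:ℝ) 1, g x := by
    rw [← Ioc_union_Ioo_eq_Ioo (by norm_num : (-1:ℝ) ≤ 0) (by norm_num : (0:ℝ) < 1),
      setIntegral_union (disjoint_left.2 fun x h1 h2 => absurd h2.1 (not_lt.2 h1.2))
        measurableSet_Ioo
        (hgint.mono_set (fun x hx => ⟨hx.1, lt_of_le_of_lt hx.2 one_pos⟩))
        (hgint.mono_set (fun x hx => ⟨by linarith [hx.1], hx.2⟩)),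
      integral_Ioc_eq_integral_Ioo]
  -- reflection for the left branch
  have hrefl : ∫ x in Ioo (-1:ℝ) 0, g x = ∫ y in Ioo (0:ℝ) 1, g (-y) := by
    have h := intervalIntegral.integral_comp_neg (a := (0:ℝ)) (b := 1) (f := g)
    simp only [neg_zero] at h
    rw [intervalIntegral.integral_of_le (by norm_num : (0:ℝ) ≤ 1),
      intervalIntegral.integral_of_le (by norm_num : (-1:ℝ) ≤ 0),
      integral_Ioc_eq_integral_Ioo, integral_Ioc_eq_integral_Ioo] at h
    exact h.symm
  -- apply the core lemma to both branches
  have core1 := sw_core α c lam hα hc hlam v hv_diff hv0 hv_deriv_pos f₁ hf₁_mem hf₁_inv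
  have hw_diff : ContDiffOn ℝ 1 (fun x => v (-x)) (Ioo (-1:ℝ) 1) := by
    have : MapsTo (fun x : ℝ => -x) (Ioo (-1:ℝ) 1) (Ioo (-1:ℝ) 1) := by
      intro x hx
      show -x ∈ Ioo (-1:ℝ) 1
      exact ⟨by linarith [hx.2], by linarith [hx.1]⟩
    exact hv_diff.comp (contDiff_neg.contDiffOn) this
  have hwd : ∀ x ∈ Ioo (0:ℝ) 1, 0 < deriv (fun x => v (-x)) x := by
    intro x hx
    rw [deriv_comp_neg]
    have := hv_deriv_neg (-x) ⟨by linarith [hx.2], by linarith [hx.1]⟩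
    linarith
  have core2 := sw_core α c lam hα hc hlam (fun x => v (-x)) hw_diff (by simpa using hv0)
    hwd f₂ hf₂_mem (fun s hs => hf₂_inv s hs)
  rw [hsplit, hrefl, core1.2, core2.2]
  -- combine the two integrals
  rw [← integral_add core2.1 core1.1]
  -- shift the integration variable
  set φ : ℝ → ℝ := fun s => Real.sqrt (s * (lam - α ^ 2 * s)) *
    (deriv f₁ s + deriv f₂ s) with hφ
  have hcomb : ∫ s in Ioo c T, (Real.sqrt (s * (lam - α ^ 2 * s)) * deriv f₂ s
      + Real.sqrt (s * (lam - α ^ 2 * s)) * deriv f₁ s) = ∫ s in Ioo c T, φ s := by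
    apply setIntegral_congr_fun measurableSet_Ioo
    intro s _
    rw [hφ]; ring
  rw [hcomb]
  have hshift : ∫ s in Ioo c T, φ s = ∫ S in Ioo (0:ℝ) (T - c), φ (S + c) := by
    have h := intervalIntegral.integral_comp_add_right (a := (0:ℝ)) (b := T - c) φ c
    rw [intervalIntegral.integral_of_le (by linarith : (0:ℝ) ≤ T - c),
      intervalIntegral.integral_of_le (by linarith : (0:ℝ) + c ≤ T - c + c),
      integral_Ioc_eq_integral_Ioo, integral_Ioc_eq_integral_Ioo] at h
    have he : T - c + c = T := by ring
    rw [he, zero_add] at h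
    exact h.symm
  rw [hshift]
  -- pointwise identity on (0, T - c)
  have hpt : ∫ S in Ioo (0:ℝ) (T - c), φ (S + c)
      = ∫ S in Ioo (0:ℝ) (T - c), |α| * (Real.sqrt (T - c - S) * Real.sqrt (S + c) *
          (deriv f₁ (S + c) + deriv f₂ (S + c))) := by
    apply setIntegral_congr_fun measurableSet_Ioo
    intro S hS
    rw [hφ]
    have h1 : lam - α ^ 2 * (S + c) = α ^ 2 * (T - c - S) := by
      rw [hTdef]; field_simp; ring
    show Real.sqrt ((S + c) * (lam - α ^ 2 * (S + c))) * _ = _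
    rw [h1, show (S + c) * (α ^ 2 * (T - c - S)) = α ^ 2 * ((T - c - S) * (S + c)) by ring,
      Real.sqrt_mul (sq_nonneg α), Real.sqrt_sq_eq_abs,
      Real.sqrt_mul (by linarith [hS.2] : (0:ℝ) ≤ T - c - S)]
    ring
  rw [hpt, integral_const_mul]
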